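/- Define in R^3 the nine points A_5=(−√3/6,−1/2,−1/2), A_6=(−√3/6,1/2,−1/2), A_7=(√3/3,0,−1/2), A_1=(√3/3,0,1/2), A_2=(−√3/6,1/2,1/2), A_3=(−√3/6,−1/2,1/2), A_4=(−√3/6−√2/2,0,0), A_8=(√3/12+√2/4, 1/4+√6/4, 0), A_9=(√3/12+√2/4, −1/4−√6/4, 0). Then |A_1−A_7|=|A_2−A_6|=|A_3−A_5|=1, the triangles A_1A_2A_3 and A_5A_6A_7 are unit equilateral, and |A_4−A_2|=|A_4−A_3|=|A_4−A_5|=|A_4−A_6|=1. -/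

import Mathlib

open Real

lemma dist3_aux (x y : EuclideanSpace ℝ (Fin 3)) (a b c d e f : ℝ)
    (hx : x = ![a,b,c]) (hy : y = ![d,e,f]) :
    dist x y = sqrt ((a-d)^2+(b-e)^2+(c-f)^2) := by
  rw [EuclideanSpace.dist_eq, Fin.sum_univ_three]
  simp [hx, hy, Real.dist_eq, sq_abs]

set_option maxHeartbeats 1000000 in
/-- The prism-plus-pyramid structure in the unit-distance embedding of the Fritsch graph:
the listed nine points in `ℝ³` satisfy the stated unit distances — the vertical prism
edges, the two unit equilateral triangles, and the four edges from the apex `A₄`. -/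
theorem fritsch_prism_pyramid (A : Fin 9 → EuclideanSpace ℝ (Fin 3))
    (h1 : A 0 = ![sqrt 3 / 3, 0, 1 / 2])
    (h2 : A 1 = ![-sqrt 3 / 6, 1 / 2, 1 / 2])
    (h3 : A 2 = ![-sqrt 3 / 6, -(1 / 2), 1 / 2])
    (h4 : A 3 = ![-sqrt 3 / 6 - sqrt 2 / 2, 0, 0])
    (h5 : A 4 = ![-sqrt 3 / 6, -(1 / 2), -(1 / 2)])
    (h6 : A 5 = ![-sqrt 3 / 6, 1 / 2, -(1 / 2)])
    (h7 : A 6 = ![sqrt 3 / 3, 0, -(1 / 2)])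
    (h8 : A 7 = ![sqrt 3 / 12 + sqrt 2 / 4, 1 / 4 + sqrt 6 / 4, 0])
    (h9 : A 8 = ![sqrt 3 / 12 + sqrt 2 / 4, -(1 / 4) - sqrt 6 / 4, 0]) :
    dist (A 0) (A 6) = 1 ∧ dist (A 1) (A 5) = 1 ∧ dist (A 2) (A 4) = 1 ∧
    dist (A 0) (A 1) = 1 ∧ dist (A 1) (A 2) = 1 ∧ dist (A 2) (A 0) = 1 ∧
    dist (A 4) (A 5) = 1 ∧ dist (A 5) (A 6) = 1 ∧ dist (A 6) (A 4) = 1 ∧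
    dist (A 3) (A 1) = 1 ∧ dist (A 3) (A 2) = 1 ∧
    dist (A 3) (A 4) = 1 ∧ dist (A 3) (A 5) = 1 := by
  have s3 : sqrt 3 ^ 2 = 3 := sq_sqrt (by norm_num)
  have s2 : sqrt 2 ^ 2 = 2 := sq_sqrt (by norm_num)
  refine ⟨?_,?_,?_,?_,?_,?_,?_,?_,?_,?_,?_,?_,?_⟩
  · rw [dist3_aux _ _ _ _ _ _ _ _ h1 h7, Real.sqrt_eq_one]; ring_nf; try linarith [s3, s2]
  · rw [dist3_aux _ _ _ _ _ _ _ _ h2 h6, Real.sqrt_eq_one]; ring_nf; try linarith [s3, s2]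
  · rw [dist3_aux _ _ _ _ _ _ _ _ h3 h5, Real.sqrt_eq_one]; ring_nf; try linarith [s3, s2]
  · rw [dist3_aux _ _ _ _ _ _ _ _ h1 h2, Real.sqrt_eq_one]; ring_nf; try linarith [s3, s2]
  · rw [dist3_aux _ _ _ _ _ _ _ _ h2 h3, Real.sqrt_eq_one]; ring_nf; try linarith [s3, s2]
  · rw [dist3_aux _ _ _ _ _ _ _ _ h3 h1, Real.sqrt_eq_one]; ring_nf; try linarith [s3, s2]
  · rw [dist3_aux _ _ _ _ _ _ _ _ h5 h6, Real.sqrt_eq_one]; ring_nf; try linarith [s3, s2]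
  · rw [dist3_aux _ _ _ _ _ _ _ _ h6 h7, Real.sqrt_eq_one]; ring_nf; try linarith [s3, s2]
  · rw [dist3_aux _ _ _ _ _ _ _ _ h7 h5, Real.sqrt_eq_one]; ring_nf; try linarith [s3, s2]
  · rw [dist3_aux _ _ _ _ _ _ _ _ h4 h2, Real.sqrt_eq_one]; ring_nf; try linarith [s3, s2]
  · rw [dist3_aux _ _ _ _ _ _ _ _ h4 h3, Real.sqrt_eq_one]; ring_nf; try linarith [s3, s2]
  · rw [dist3_aux _ _ _ _ _ _ _ _ h4 h5, Real.sqrt_eq_one]; ring_nf; try linarith [s3, s2]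
  · rw [dist3_aux _ _ _ _ _ _ _ _ h4 h6, Real.sqrt_eq_one]; ring_nf; try linarith [s3, s2]
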